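/- Let N, d be natural numbers and let U_1, …, U_N be unitary d×d complex matrices. Define the Feynman clock Hamiltonian H_U on ℂ^{N+1} ⊗ ℂ^d by H_U = Σ_{j=1}^{N} √(j(N−j+1)) (E_{j,j-1} ⊗ U_j + E_{j-1,j} ⊗ U_j†), where E_{j,k} denotes the (N+1)×(N+1) matrix unit. Then H_U is Hermitian, and for every vector ψ ∈ ℂ^d, exp(−i(π/2)·H_U)(e_0 ⊗ ψ) = (−i)^N · e_N ⊗ (U_N ⋯ U_2 U_1 ψ), where e_0 and e_N are the first and last standard basis vectors of ℂ^{N+1}. -/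

import Mathlib

open Matrix Kronecker

/-- The Feynman clock Hamiltonian `H_U = Σ_{j=1}^{N} √(j(N−j+1)) (E_{j,j-1} ⊗ U_j +
E_{j-1,j} ⊗ U_j†)` on `ℂ^{N+1} ⊗ ℂ^d` (here indexed by `j : Fin N`, representing `j+1`,
so `U j` is the `(j+1)`-st gate). -/
noncomputable def clockHam (N d : ℕ) (U : Fin N → Matrix (Fin d) (Fin d) ℂ) :
    Matrix (Fin (N + 1) × Fin d) (Fin (N + 1) × Fin d) ℂ :=
  ∑ j : Fin N, (Real.sqrt ((((j : ℕ) + 1) * (N - (j : ℕ)) : ℕ)) : ℂ) •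
    ((Matrix.single j.succ j.castSucc (1 : ℂ)) ⊗ₖ U j +
      (Matrix.single j.castSucc j.succ (1 : ℂ)) ⊗ₖ (U j)ᴴ)

/-- The Kronecker (tensor) product of two vectors. -/
def vecKron {m d : Type*} (v : m → ℂ) (w : d → ℂ) : m × d → ℂ :=
  fun p => v p.1 * w p.2

section FeynmanClockAux

open NormedSpace

noncomputable section

variable {N d : ℕ}

/-- coefficient b_m = √((m+1)(N-m)) -/
def fcC (N m : ℕ) : ℝ := Real.sqrt (((m + 1) * (N - m) : ℕ))
/-- coefficient a_m = √(m(N-m+1)) -/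
def fcA' (N m : ℕ) : ℝ := Real.sqrt ((m * (N - m + 1) : ℕ))

def fcPsi (N : ℕ) (t : ℝ) (k : ℕ) : ℂ :=
  (Real.sqrt (N.choose k) : ℂ) * (Real.cos t : ℂ) ^ (N - k) *
    ((-Complex.I) * (Real.sin t : ℂ)) ^ k

lemma fc_sqrtB (N k : ℕ) (hk : k ≤ N) :
    fcC N k * Real.sqrt (N.choose (k + 1)) = (N - k : ℕ) * Real.sqrt (N.choose k) := by
  have h : (((k + 1) * (N - k) : ℕ) : ℝ) * (N.choose (k + 1) : ℝ) =
      ((N - k : ℕ) : ℝ) * ((N - k : ℕ) : ℝ) * (N.choose k : ℝ) := by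
    have hn : ((k + 1) * (N - k)) * N.choose (k + 1) = ((N - k) * (N - k)) * N.choose k := by
      have h2 : N.choose (k + 1) * (k + 1) = N.choose k * (N - k) := Nat.choose_succ_right_eq N k
      calc ((k + 1) * (N - k)) * N.choose (k + 1) = (N - k) * (N.choose (k + 1) * (k + 1)) := by ring
        _ = (N - k) * (N.choose k * (N - k)) := by rw [h2]
        _ = ((N - k) * (N - k)) * N.choose k := by ring
    exact_mod_cast congrArg (fun n : ℕ => (n : ℝ)) hn
  rw [fcC, ← Real.sqrt_mul (by positivity), h, Real.sqrt_mul (by positivity),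
    Real.sqrt_mul_self (by positivity)]

lemma fc_sqrtA (N k : ℕ) (hk : k ≤ N) :
    fcA' N k * Real.sqrt (N.choose (k - 1)) = (k : ℝ) * Real.sqrt (N.choose k) := by
  rcases k with _ | k
  · simp [fcA']
  · have h : ((((k + 1) * (N - (k + 1) + 1)) : ℕ) : ℝ) * (N.choose k : ℝ) =
        ((k + 1 : ℕ) : ℝ) * ((k + 1 : ℕ) : ℝ) * (N.choose (k + 1) : ℝ) := by
      have hNk : N - (k + 1) + 1 = N - k := by omega
      have h2 : N.choose (k + 1) * (k + 1) = N.choose k * (N - k) := Nat.choose_succ_right_eq N k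
      have hn : ((k + 1) * (N - (k + 1) + 1)) * N.choose k = ((k + 1) * (k + 1)) * N.choose (k + 1) := by
        rw [hNk]
        calc (k + 1) * (N - k) * N.choose k = (k + 1) * (N.choose k * (N - k)) := by ring
          _ = (k + 1) * (N.choose (k + 1) * (k + 1)) := by rw [h2]
          _ = ((k + 1) * (k + 1)) * N.choose (k + 1) := by ring
      exact_mod_cast congrArg (fun n : ℕ => (n : ℝ)) hn
    rw [fcA', Nat.add_sub_cancel, ← Real.sqrt_mul (by positivity), h,
      Real.sqrt_mul (by positivity), Real.sqrt_mul_self (by positivity)]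

lemma fcPsi_hasDerivAt (N k : ℕ) (hk : k ≤ N) (t : ℝ) :
    HasDerivAt (fun t => fcPsi N t k)
      (-Complex.I * ((fcA' N k : ℂ) * fcPsi N t (k - 1) + (fcC N k : ℂ) * fcPsi N t (k + 1))) t := by
  have hc : HasDerivAt (fun t : ℝ => ((Real.cos t : ℝ) : ℂ)) ((-Real.sin t : ℝ) : ℂ) t :=
    (Real.hasDerivAt_cos t).ofReal_comp
  have hs : HasDerivAt (fun t : ℝ => (-Complex.I) * ((Real.sin t : ℝ) : ℂ))
      ((-Complex.I) * ((Real.cos t : ℝ) : ℂ)) t :=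
    ((Real.hasDerivAt_sin t).ofReal_comp).const_mul (-Complex.I)
  have hck : HasDerivAt (fun t : ℝ => ((Real.cos t : ℝ) : ℂ) ^ (N - k))
      (((-Real.sin t : ℝ) : ℂ) • (((N - k : ℕ) : ℂ) * ((Real.cos t : ℝ) : ℂ) ^ (N - k - 1))) t :=
    (hasDerivAt_pow (N - k) _).scomp t hc
  have hsk : HasDerivAt (fun t : ℝ => ((-Complex.I) * ((Real.sin t : ℝ) : ℂ)) ^ k)
      (((-Complex.I) * ((Real.cos t : ℝ) : ℂ)) •
        ((k : ℂ) * ((-Complex.I) * ((Real.sin t : ℝ) : ℂ)) ^ (k - 1))) t :=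
    (hasDerivAt_pow k _).scomp t hs
  have h := ((hck.fun_mul hsk).const_mul ((Real.sqrt (N.choose k) : ℝ) : ℂ))
  have hfun : (fun t => fcPsi N t k) =
      (fun t : ℝ => ((Real.sqrt (N.choose k) : ℝ) : ℂ) *
        (((Real.cos t : ℝ) : ℂ) ^ (N - k) * ((-Complex.I) * ((Real.sin t : ℝ) : ℂ)) ^ k)) := by
    funext u; rw [fcPsi, mul_assoc]
  rw [hfun]
  refine h.congr_deriv (Eq.symm ?_)
  have hA : (fcA' N k : ℂ) * ((Real.sqrt (N.choose (k - 1)) : ℝ) : ℂ) =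
      (k : ℂ) * ((Real.sqrt (N.choose k) : ℝ) : ℂ) := by
    exact_mod_cast congrArg (fun r : ℝ => (r : ℂ)) (fc_sqrtA N k hk)
  have hB : (fcC N k : ℂ) * ((Real.sqrt (N.choose (k + 1)) : ℝ) : ℂ) =
      ((N - k : ℕ) : ℂ) * ((Real.sqrt (N.choose k) : ℝ) : ℂ) := by
    exact_mod_cast congrArg (fun r : ℝ => (r : ℂ)) (fc_sqrtB N k hk)
  simp only [fcPsi]
  have e1 : N - (k + 1) = N - k - 1 := by omega
  rw [e1]
  simp only [smul_eq_mul, Complex.ofReal_neg]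
  rcases k with _ | k
  · have hA0 : (fcA' N 0 : ℂ) = 0 := by simp [fcA']
    rw [hA0]
    simp only [Nat.zero_sub, Nat.sub_zero, pow_zero, Nat.cast_zero, zero_mul, mul_zero,
      add_zero, zero_add, mul_one, pow_one]
    simp only [Nat.sub_zero] at hB
    linear_combination (-Complex.I * ((Real.cos t : ℝ) : ℂ) ^ (N - 1) *
      (-Complex.I * ((Real.sin t : ℝ) : ℂ))) * hB +
      (((Real.cos t : ℝ) : ℂ) ^ (N - 1) * ((Real.sin t : ℝ) : ℂ) * (N : ℂ) *
        ((Real.sqrt (N.choose 0) : ℝ) : ℂ)) * Complex.I_sq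
  · rw [Nat.add_sub_cancel] at *
    have e2 : N - k = N - (k + 1) + 1 := by omega
    rw [e2]
    linear_combination
      (-Complex.I * ((Real.cos t : ℝ) : ℂ) ^ (N - (k + 1) + 1) *
        ((-Complex.I) * ((Real.sin t : ℝ) : ℂ)) ^ k) * hA +
      (-Complex.I * ((Real.cos t : ℝ) : ℂ) ^ (N - (k + 1) - 1) *
        ((-Complex.I) * ((Real.sin t : ℝ) : ℂ)) ^ (k + 2)) * hB +
      (-Complex.I * Complex.I ^ k * ((Real.cos t : ℝ) : ℂ) ^ (N - (k + 1) - 1) *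
        ((Real.sin t : ℝ) : ℂ) ^ 2 * ((Real.sin t : ℝ) : ℂ) ^ k *
        ((Real.sqrt (N.choose (k + 1)) : ℝ) : ℂ) * ((N - (k + 1) : ℕ) : ℂ) * (-1 : ℂ) ^ k) *
        Complex.I_sq

/-- the bare clock matrix -/
def fcAmat (N : ℕ) : Matrix (Fin (N + 1)) (Fin (N + 1)) ℂ :=
  ∑ j : Fin N, (fcC N (j : ℕ) : ℂ) •
    (Matrix.single j.succ j.castSucc (1 : ℂ) + Matrix.single j.castSucc j.succ (1 : ℂ))

lemma sum_mulVec {n m : Type*} [Fintype n] [Fintype m] {ι : Type*} (s : Finset ι)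
    (M : ι → Matrix m n ℂ) (v : n → ℂ) :
    (∑ i ∈ s, M i) *ᵥ v = ∑ i ∈ s, M i *ᵥ v := by
  ext x
  simp [Matrix.mulVec, dotProduct, Matrix.sum_apply, Finset.sum_mul]
  rw [Finset.sum_comm]

lemma fcAmat_mulVec (N : ℕ) (f : ℕ → ℂ) (k : Fin (N + 1)) :
    (fcAmat N *ᵥ fun j : Fin (N + 1) => f (j : ℕ)) k =
      (fcA' N (k : ℕ) : ℂ) * f ((k : ℕ) - 1) + (fcC N (k : ℕ) : ℂ) * f ((k : ℕ) + 1) := by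
  rw [fcAmat, _root_.sum_mulVec]
  simp only [Matrix.smul_mulVec, Matrix.add_mulVec, Matrix.single_mulVec,
    one_mul]
  rw [Finset.sum_apply]
  simp only [Pi.smul_apply, Pi.add_apply, Function.update_apply, Pi.zero_apply, smul_eq_mul]
  have split : ∀ j : Fin N,
      (fcC N (j : ℕ) : ℂ) * ((if k = j.succ then f (j.castSucc : ℕ) else 0) +
        (if k = j.castSucc then f (j.succ : ℕ) else 0)) =
      (if k = j.succ then (fcC N (j : ℕ) : ℂ) * f (j.castSucc : ℕ) else 0) +
      (if k = j.castSucc then (fcC N (j : ℕ) : ℂ) * f (j.succ : ℕ) else 0) := by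
    intro j; split_ifs <;> ring
  rw [Finset.sum_congr rfl fun j _ => split j, Finset.sum_add_distrib]
  congr 1
  · -- lowering part
    induction k using Fin.cases with
    | zero =>
      rw [Finset.sum_eq_zero]
      · simp [fcA']
      · intro j _
        rw [if_neg (Fin.succ_ne_zero j).symm.elim]
    | succ i =>
      rw [Finset.sum_eq_single i]
      · rw [if_pos rfl]
        have h1 : ((i.succ : Fin (N + 1)) : ℕ) - 1 = (i.castSucc : ℕ) := by
          simp [Fin.val_succ]
        have h2 : fcA' N ((i.succ : Fin (N + 1)) : ℕ) = fcC N (i : ℕ) := by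
          have hlt := i.isLt
          rw [fcA', fcC, Fin.val_succ]
          have hbc : N - ((i : ℕ) + 1) + 1 = N - (i : ℕ) := by omega
          rw [hbc]
        rw [h1, h2]
      · intro j _ hj
        rw [if_neg fun h => hj (Fin.succ_injective _ h.symm)]
      · intro h; exact absurd (Finset.mem_univ i) h
  · -- raising part
    induction k using Fin.lastCases with
    | last =>
      rw [Finset.sum_eq_zero]
      · have : fcC N ((Fin.last N : Fin (N + 1)) : ℕ) = 0 := by
          simp [fcC]
        rw [this]; simp
      · intro j _
        rw [if_neg (Fin.ne_last_of_lt (Fin.castSucc_lt_last j)).symm.elim]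
    | cast i =>
      rw [Finset.sum_eq_single i]
      · rw [if_pos rfl, Fin.coe_castSucc, Fin.val_succ]
      · intro j _ hj
        rw [if_neg fun h => hj (Fin.castSucc_injective _ h.symm)]
      · intro h; exact absurd (Finset.mem_univ i) h

def fcE0 (N : ℕ) : Fin (N + 1) → ℂ := Pi.single 0 1
def fcEL (N : ℕ) : Fin (N + 1) → ℂ := Pi.single (Fin.last N) 1

lemma fcPsi_zero (N : ℕ) (k : Fin (N + 1)) :
    fcPsi N 0 (k : ℕ) = fcE0 N k := by
  rcases eq_or_ne k 0 with rfl | hk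
  · simp [fcPsi, fcE0]
  · have hk' : (k : ℕ) ≠ 0 := fun h => hk (Fin.ext h)
    rw [fcPsi, fcE0, Pi.single_apply, if_neg (fun h => hk h)]
    rcases Nat.exists_eq_succ_of_ne_zero hk' with ⟨m, hm⟩
    simp [hm, pow_succ]

lemma fcPsi_pi_div_two (N : ℕ) (k : Fin (N + 1)) :
    fcPsi N (Real.pi / 2) (k : ℕ) =
      ((-Complex.I) ^ N • fcEL N) k := by
  rcases eq_or_ne k (Fin.last N) with rfl | hk
  · simp [fcPsi, fcEL, Real.cos_pi_div_two, Real.sin_pi_div_two, Fin.val_last]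
  · have hk' : (k : ℕ) < N := by
      have := k.isLt
      have : (k : ℕ) ≠ N := fun h => hk (Fin.ext (by simp [h, Fin.val_last]))
      omega
    have h0 : N - (k : ℕ) ≠ 0 := by omega
    rw [fcPsi]
    rcases Nat.exists_eq_succ_of_ne_zero h0 with ⟨m, hm⟩
    simp [fcEL, hm, pow_succ, Real.cos_pi_div_two, Pi.single_apply, if_neg hk]

theorem fcAmat_exp (N : ℕ) :
    NormedSpace.exp ((-Complex.I * ((Real.pi / 2 : ℝ) : ℂ)) • fcAmat N) *ᵥ
        fcE0 N =
      (-Complex.I) ^ N • fcEL N := by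
  letI : SeminormedRing (Matrix (Fin (N + 1)) (Fin (N + 1)) ℂ) := Matrix.linftyOpSemiNormedRing
  letI : NormedRing (Matrix (Fin (N + 1)) (Fin (N + 1)) ℂ) := Matrix.linftyOpNormedRing
  letI : NormedAlgebra ℂ (Matrix (Fin (N + 1)) (Fin (N + 1)) ℂ) := Matrix.linftyOpNormedAlgebra
  set X : Matrix (Fin (N + 1)) (Fin (N + 1)) ℂ := (-Complex.I) • fcAmat N with hX
  have hΦd : ∀ (t : ℝ) (k : Fin (N + 1)),
      HasDerivAt (fun t => fcPsi N t (k : ℕ)) ((X *ᵥ fun j : Fin (N + 1) => fcPsi N t (j : ℕ)) k) t := by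
    intro t k
    have h := fcPsi_hasDerivAt N k (by omega) t
    have he : (X *ᵥ fun j : Fin (N + 1) => fcPsi N t (j : ℕ)) k =
        -Complex.I * ((fcA' N (k : ℕ) : ℂ) * fcPsi N t ((k : ℕ) - 1) +
          (fcC N (k : ℕ) : ℂ) * fcPsi N t ((k : ℕ) + 1)) := by
      rw [hX, Matrix.smul_mulVec, Pi.smul_apply, fcAmat_mulVec, smul_eq_mul]
    rw [he]
    exact h
  -- derivative of g t := exp((-t) • X)
  have hg : ∀ t : ℝ, HasDerivAt (fun t : ℝ => NormedSpace.exp ((-(t : ℂ)) • X))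
      ((-1 : ℂ) • (NormedSpace.exp ((-(t : ℂ)) • X) * X)) t := by
    intro t
    have h1 : HasDerivAt (fun z : ℂ => NormedSpace.exp (z • X))
        (NormedSpace.exp ((-(t : ℂ)) • X) * X) (-(t : ℂ)) := hasDerivAt_exp_smul_const X _
    have h2 : HasDerivAt (fun t : ℝ => -(t : ℂ)) (-1 : ℂ) t := by
      simpa using ((hasDerivAt_id (t : ℂ)).neg.comp_ofReal (z := t))
    exact h1.scomp t h2
  -- each component of t ↦ exp((-t)•X) *ᵥ Φ t has derivative 0
  have hconst : ∀ k : Fin (N + 1),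
      (fun t : ℝ => (NormedSpace.exp ((-(t : ℂ)) • X) *ᵥ fun j : Fin (N + 1) => fcPsi N t (j : ℕ)) k) =
      (fun _ : ℝ => ((1 : Matrix (Fin (N + 1)) (Fin (N + 1)) ℂ) *ᵥ fun j : Fin (N + 1) => fcPsi N 0 (j : ℕ)) k) := by
    intro k
    have key : ∀ t : ℝ, HasDerivAt
        (fun t : ℝ => (NormedSpace.exp ((-(t : ℂ)) • X) *ᵥ fun j : Fin (N + 1) => fcPsi N t (j : ℕ)) k)
        0 t := by
      intro t
      have hfun : (fun t : ℝ => (NormedSpace.exp ((-(t : ℂ)) • X) *ᵥ fun j : Fin (N + 1) => fcPsi N t (j : ℕ)) k) =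
          fun t : ℝ => ∑ j : Fin (N + 1), (NormedSpace.exp ((-(t : ℂ)) • X)) k j * fcPsi N t (j : ℕ) := by
        funext u; simp [Matrix.mulVec, dotProduct]
      rw [hfun]
      have hterm : ∀ j : Fin (N + 1), HasDerivAt
          (fun t : ℝ => (NormedSpace.exp ((-(t : ℂ)) • X)) k j * fcPsi N t (j : ℕ))
          (((-1 : ℂ) • (NormedSpace.exp ((-(t : ℂ)) • X) * X)) k j * fcPsi N t (j : ℕ) +
            (NormedSpace.exp ((-(t : ℂ)) • X)) k j *
              ((X *ᵥ fun j : Fin (N + 1) => fcPsi N t (j : ℕ)) j)) t := by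
        intro j
        have hL : HasDerivAt (fun t : ℝ => (NormedSpace.exp ((-(t : ℂ)) • X)) k j)
            (((-1 : ℂ) • (NormedSpace.exp ((-(t : ℂ)) • X) * X)) k j) t := by
          let lm : Matrix (Fin (N + 1)) (Fin (N + 1)) ℂ →ₗ[ℂ] ℂ :=
            { toFun := fun M => M k j
              map_add' := fun _ _ => rfl
              map_smul' := fun _ _ => rfl }
          exact ((LinearMap.toContinuousLinearMap lm).restrictScalars
            ℝ).hasFDerivAt.comp_hasDerivAt t (hg t)
        exact hL.mul (hΦd t j)
      have hsum := HasDerivAt.fun_sum (u := Finset.univ)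
        (fun j _ => hterm j)
      have hzero : ∑ j : Fin (N + 1),
          (((-1 : ℂ) • (NormedSpace.exp ((-(t : ℂ)) • X) * X)) k j * fcPsi N t (j : ℕ) +
            (NormedSpace.exp ((-(t : ℂ)) • X)) k j *
              ((X *ᵥ fun j : Fin (N + 1) => fcPsi N t (j : ℕ)) j)) = 0 := by
        rw [Finset.sum_add_distrib]
        have e1 : ∑ j : Fin (N + 1),
            ((-1 : ℂ) • (NormedSpace.exp ((-(t : ℂ)) • X) * X)) k j * fcPsi N t (j : ℕ) =
            (((-1 : ℂ) • (NormedSpace.exp ((-(t : ℂ)) • X) * X)) *ᵥ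
              fun j : Fin (N + 1) => fcPsi N t (j : ℕ)) k := by
          simp [Matrix.mulVec, dotProduct]
        have e2 : ∑ j : Fin (N + 1),
            (NormedSpace.exp ((-(t : ℂ)) • X)) k j *
              ((X *ᵥ fun j : Fin (N + 1) => fcPsi N t (j : ℕ)) j) =
            (NormedSpace.exp ((-(t : ℂ)) • X) *ᵥ (X *ᵥ fun j : Fin (N + 1) => fcPsi N t (j : ℕ))) k := by
          simp [Matrix.mulVec, dotProduct]
        rw [e1, e2, Matrix.mulVec_mulVec]
        simp [Matrix.neg_mulVec, Matrix.smul_mulVec]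
      rw [hzero] at hsum
      exact hsum
    have hdiff : Differentiable ℝ (fun t : ℝ =>
        (NormedSpace.exp ((-(t : ℂ)) • X) *ᵥ fun j : Fin (N + 1) => fcPsi N t (j : ℕ)) k) :=
      fun t => (key t).differentiableAt
    funext t
    have := is_const_of_deriv_eq_zero hdiff (fun t => (key t).deriv) t 0
    rw [this]
    have h0 : (-(((0 : ℝ) : ℂ))) • X = (0 : Matrix (Fin (N + 1)) (Fin (N + 1)) ℂ) := by norm_num
    rw [h0, NormedSpace.exp_zero]
  -- evaluate at π/2
  have hPI := fun k => congrFun (hconst k) (Real.pi / 2)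
  have hval : NormedSpace.exp ((-(((Real.pi / 2 : ℝ) : ℂ))) • X) *ᵥ
      (fun j : Fin (N + 1) => fcPsi N (Real.pi / 2) (j : ℕ)) = fcE0 N := by
    funext k
    rw [hPI k, Matrix.one_mulVec]
    exact fcPsi_zero N k
  have hΦpi : (fun j : Fin (N + 1) => fcPsi N (Real.pi / 2) (j : ℕ)) =
      (-Complex.I) ^ N • fcEL N := by
    funext k; exact fcPsi_pi_div_two N k
  rw [hΦpi] at hval
  -- multiply by exp((π/2)•X)
  have hcomm : Commute (((Real.pi / 2 : ℝ) : ℂ) • X) ((-(((Real.pi / 2 : ℝ) : ℂ))) • X) :=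
    ((Commute.refl X).smul_left _).smul_right _
  have hmul : NormedSpace.exp (((Real.pi / 2 : ℝ) : ℂ) • X) *
      NormedSpace.exp ((-(((Real.pi / 2 : ℝ) : ℂ))) • X) = 1 := by
    rw [← Matrix.exp_add_of_commute _ _ hcomm]
    simp
  have final := congrArg (fun v => NormedSpace.exp (((Real.pi / 2 : ℝ) : ℂ) • X) *ᵥ v) hval
  simp only [Matrix.mulVec_mulVec, hmul, Matrix.one_mulVec] at final
  have hsc : (-Complex.I * ((Real.pi / 2 : ℝ) : ℂ)) • fcAmat N = ((Real.pi / 2 : ℝ) : ℂ) • X := by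
    rw [hX, smul_smul, mul_comm]
  rw [hsc, ← final]

lemma fcAmat_exp' (N : ℕ) :
    NormedSpace.exp ((-Complex.I * ((Real.pi / 2 : ℝ) : ℂ)) • fcAmat N) *ᵥ
        (Pi.single (0 : Fin (N + 1)) (1 : ℂ)) =
      (-Complex.I) ^ N • (Pi.single (Fin.last N) (1 : ℂ) : Fin (N + 1) → ℂ) := fcAmat_exp N

def fcW (N d : ℕ) (U : Fin N → Matrix (Fin d) (Fin d) ℂ) : ℕ → Matrix (Fin d) (Fin d) ℂ
  | 0 => 1
  | m + 1 => (if h : m < N then U ⟨m, h⟩ else 1) * fcW N d U m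

variable {N d : ℕ} {U : Fin N → Matrix (Fin d) (Fin d) ℂ}

lemma fcW_mem (hU : ∀ j, U j ∈ Matrix.unitaryGroup (Fin d) ℂ) (m : ℕ) :
    fcW N d U m ∈ Matrix.unitaryGroup (Fin d) ℂ := by
  induction m with
  | zero => exact one_mem _
  | succ m ih =>
    refine mul_mem ?_ ih
    split_ifs with h
    · exact hU _
    · exact one_mem _

lemma fcW_mul_conjT (hU : ∀ j, U j ∈ Matrix.unitaryGroup (Fin d) ℂ) (m : ℕ) :
    fcW N d U m * (fcW N d U m)ᴴ = 1 := by
  have := (Matrix.mem_unitaryGroup_iff).mp (fcW_mem hU m)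
  rwa [Matrix.star_eq_conjTranspose] at this

lemma fcW_conjT_mul (hU : ∀ j, U j ∈ Matrix.unitaryGroup (Fin d) ℂ) (m : ℕ) :
    (fcW N d U m)ᴴ * fcW N d U m = 1 := by
  have := (Matrix.mem_unitaryGroup_iff').mp (fcW_mem hU m)
  rwa [Matrix.star_eq_conjTranspose] at this

lemma fcW_succ (j : Fin N) :
    fcW N d U ((j : ℕ) + 1) = U j * fcW N d U (j : ℕ) := by
  rw [fcW, dif_pos j.isLt]

lemma fcW_eq_prod : fcW N d U N = (List.ofFn U).reverse.prod := by
  have key : ∀ (l : ℕ) (hl : l ≤ N),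
      (List.ofFn fun i : Fin l => U (Fin.castLE hl i)).reverse.prod = fcW N d U l := by
    intro l
    induction l with
    | zero => intro hl; simp [fcW]
    | succ l ih =>
      intro hl
      rw [List.ofFn_succ']
      rw [List.concat_eq_append, List.reverse_append, List.reverse_singleton,
        List.singleton_append, List.prod_cons]
      have h1 : (fun i : Fin l => U (Fin.castLE hl i.castSucc)) =
          fun i : Fin l => U (Fin.castLE (Nat.le_of_succ_le hl) i) := rfl
      rw [show (List.ofFn fun i : Fin l => U (Fin.castLE hl i.castSucc)).reverse.prod
          = fcW N d U l from by rw [h1]; exact ih _]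
      rw [fcW, dif_pos (by omega : l < N)]
      congr 1
  have h := key N le_rfl
  rw [show (fun i : Fin N => U (Fin.castLE le_rfl i)) = U from
    funext fun i => congrArg U (Fin.ext rfl)] at h
  exact h.symm

-- Kronecker helpers
lemma kron_conjT {n m : ℕ} (A : Matrix (Fin n) (Fin n) ℂ) (B : Matrix (Fin m) (Fin m) ℂ) :
    (A ⊗ₖ B)ᴴ = Aᴴ ⊗ₖ Bᴴ := by
  ext ⟨i, j⟩ ⟨k, l⟩
  simp [Matrix.conjTranspose_apply, mul_comm]

lemma stdBasis_conjT {n : ℕ} (i j : Fin n) :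
    (Matrix.single i j (1 : ℂ))ᴴ = Matrix.single j i (1 : ℂ) := by
  ext a b
  simp [Matrix.conjTranspose_apply, Matrix.single, and_comm]

lemma sum_stdBasis_diag {n : ℕ} : ∑ k : Fin n, Matrix.single k k (1 : ℂ) = 1 := by
  ext i j
  rw [Matrix.sum_apply]
  rcases eq_or_ne i j with rfl | hij
  · rw [Finset.sum_eq_single i]
    · simp
    · intro b _ hb; exact Matrix.single_apply_of_ne _ _ _ _ _ (by tauto)
    · simp
  · rw [Finset.sum_eq_zero, Matrix.one_apply_ne hij]
    intro b _
    exact Matrix.single_apply_of_ne _ _ _ _ _ (by rintro ⟨rfl, rfl⟩; exact hij rfl)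

lemma kron_mulVec {n m : ℕ} (A : Matrix (Fin n) (Fin n) ℂ) (B : Matrix (Fin m) (Fin m) ℂ)
    (v : Fin n → ℂ) (w : Fin m → ℂ) :
    (A ⊗ₖ B) *ᵥ vecKron v w = vecKron (A *ᵥ v) (B *ᵥ w) := by
  funext ⟨k, i⟩
  simp only [Matrix.mulVec, dotProduct, vecKron, Fintype.sum_prod_type, kroneckerMap_apply]
  rw [Finset.sum_mul_sum]
  exact Finset.sum_congr rfl fun x _ => Finset.sum_congr rfl fun y _ => by ring

lemma vecKron_smul {m' d' : Type*} (c : ℂ) (v : m' → ℂ) (w : d' → ℂ) :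
    vecKron (c • v) w = c • vecKron v w := by
  funext p; simp [vecKron]; ring

lemma sum_kron {ι : Type*} (s : Finset ι) (A : ι → Matrix (Fin (N + 1)) (Fin (N + 1)) ℂ)
    (B : Matrix (Fin d) (Fin d) ℂ) :
    (∑ i ∈ s, A i) ⊗ₖ B = ∑ i ∈ s, A i ⊗ₖ B := by
  ext ⟨i, p⟩ ⟨j, q⟩
  simp [Matrix.sum_apply, Finset.sum_mul]

variable (U)

def fcV : Matrix (Fin (N + 1) × Fin d) (Fin (N + 1) × Fin d) ℂ :=
  ∑ k : Fin (N + 1), Matrix.single k k (1 : ℂ) ⊗ₖ fcW N d U (k : ℕ)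

lemma fcV_conjT : (fcV U)ᴴ =
    ∑ k : Fin (N + 1), Matrix.single k k (1 : ℂ) ⊗ₖ (fcW N d U (k : ℕ))ᴴ := by
  rw [fcV, Matrix.conjTranspose_sum]
  exact Finset.sum_congr rfl fun k _ => by rw [kron_conjT, stdBasis_conjT]

lemma fcV_mul_kron (a b : Fin (N + 1)) (M : Matrix (Fin d) (Fin d) ℂ) :
    fcV U * (Matrix.single a b (1 : ℂ) ⊗ₖ M) =
      Matrix.single a b (1 : ℂ) ⊗ₖ (fcW N d U (a : ℕ) * M) := by
  rw [fcV, Finset.sum_mul]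
  rw [Finset.sum_eq_single a]
  · rw [← Matrix.mul_kronecker_mul, Matrix.single_mul_single_same, one_mul]
  · intro k _ hk
    rw [← Matrix.mul_kronecker_mul]
    simp [Matrix.single_mul_single_of_ne, hk, Matrix.zero_kronecker]
  · intro h; exact absurd (Finset.mem_univ a) h

lemma kron_mul_fcVH (a b : Fin (N + 1)) (M : Matrix (Fin d) (Fin d) ℂ) :
    (Matrix.single a b (1 : ℂ) ⊗ₖ M) * (fcV U)ᴴ =
      Matrix.single a b (1 : ℂ) ⊗ₖ (M * (fcW N d U (b : ℕ))ᴴ) := by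
  rw [fcV_conjT, Finset.mul_sum]
  rw [Finset.sum_eq_single b]
  · rw [← Matrix.mul_kronecker_mul, Matrix.single_mul_single_same, one_mul]
  · intro k _ hk
    rw [← Matrix.mul_kronecker_mul]
    simp [Matrix.single_mul_single_of_ne, Ne.symm hk, Matrix.zero_kronecker]
  · intro h; exact absurd (Finset.mem_univ b) h

lemma fcV_mul_conjT (hU : ∀ j, U j ∈ Matrix.unitaryGroup (Fin d) ℂ) :
    fcV U * (fcV U)ᴴ = 1 := by
  rw [fcV_conjT, Finset.mul_sum]
  have : ∀ k : Fin (N + 1), fcV U * (Matrix.single k k (1 : ℂ) ⊗ₖ (fcW N d U (k : ℕ))ᴴ) =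
      Matrix.single k k (1 : ℂ) ⊗ₖ (1 : Matrix (Fin d) (Fin d) ℂ) := by
    intro k
    rw [fcV_mul_kron, fcW_mul_conjT hU]
  rw [Finset.sum_congr rfl fun k _ => this k, ← sum_kron, sum_stdBasis_diag,
    Matrix.one_kronecker_one]

lemma clockHam_conj (hU : ∀ j, U j ∈ Matrix.unitaryGroup (Fin d) ℂ) :
    clockHam N d U = fcV U * ((fcAmat N) ⊗ₖ (1 : Matrix (Fin d) (Fin d) ℂ)) * (fcV U)ᴴ := by
  rw [fcAmat, sum_kron, Finset.mul_sum, Finset.sum_mul, clockHam]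
  refine Finset.sum_congr rfl fun j _ => ?_
  rw [Matrix.smul_kronecker, mul_smul_comm, smul_mul_assoc, Matrix.add_kronecker,
    Matrix.mul_add, Matrix.add_mul]
  rw [fcV_mul_kron, fcV_mul_kron, kron_mul_fcVH, kron_mul_fcVH, mul_one, mul_one]
  congr 2
  · congr 1
    have hv : ((j.succ : Fin (N + 1)) : ℕ) = (j : ℕ) + 1 := Fin.val_succ j
    have hc : ((j.castSucc : Fin (N + 1)) : ℕ) = (j : ℕ) := Fin.coe_castSucc j
    rw [hv, hc, fcW_succ, mul_assoc, fcW_mul_conjT hU, mul_one]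
  · congr 1
    have hv : ((j.succ : Fin (N + 1)) : ℕ) = (j : ℕ) + 1 := Fin.val_succ j
    have hc : ((j.castSucc : Fin (N + 1)) : ℕ) = (j : ℕ) := Fin.coe_castSucc j
    rw [hv, hc, fcW_succ, Matrix.conjTranspose_mul, ← mul_assoc, fcW_mul_conjT hU, one_mul]

lemma clockHam_herm : (clockHam N d U).IsHermitian := by
  show (clockHam N d U)ᴴ = clockHam N d U
  rw [clockHam, Matrix.conjTranspose_sum]
  refine Finset.sum_congr rfl fun j _ => ?_
  rw [Matrix.conjTranspose_smul, Matrix.conjTranspose_add, kron_conjT, kron_conjT,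
    stdBasis_conjT, stdBasis_conjT, Matrix.conjTranspose_conjTranspose]
  rw [show star ((Real.sqrt ((((j : ℕ) + 1) * (N - (j : ℕ)) : ℕ)) : ℂ)) =
      (Real.sqrt ((((j : ℕ) + 1) * (N - (j : ℕ)) : ℕ)) : ℂ) from Complex.conj_ofReal _]
  exact congrArg _ (add_comm _ _)

/-- the ⊗ₖ 1 algebra homomorphism -/
def kronRight (n d : ℕ) : Matrix (Fin n) (Fin n) ℂ →ₐ[ℂ] Matrix (Fin n × Fin d) (Fin n × Fin d) ℂ :=
  AlgHom.ofLinearMap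
    { toFun := fun M => M ⊗ₖ (1 : Matrix (Fin d) (Fin d) ℂ)
      map_add' := fun A B => Matrix.add_kronecker A B 1
      map_smul' := fun c A => Matrix.smul_kronecker c A 1 }
    Matrix.one_kronecker_one
    (fun A B => by
      show (A * B) ⊗ₖ (1 : Matrix (Fin d) (Fin d) ℂ) =
        (A ⊗ₖ (1 : Matrix (Fin d) (Fin d) ℂ)) * (B ⊗ₖ (1 : Matrix (Fin d) (Fin d) ℂ))
      rw [← Matrix.mul_kronecker_mul, one_mul])

lemma exp_kron (n d' : ℕ) (A : Matrix (Fin n) (Fin n) ℂ) :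
    NormedSpace.exp (A ⊗ₖ (1 : Matrix (Fin d') (Fin d') ℂ)) =
      (NormedSpace.exp A) ⊗ₖ (1 : Matrix (Fin d') (Fin d') ℂ) := by
  letI : SeminormedRing (Matrix (Fin n) (Fin n) ℂ) := Matrix.linftyOpSemiNormedRing
  letI : NormedRing (Matrix (Fin n) (Fin n) ℂ) := Matrix.linftyOpNormedRing
  letI : NormedAlgebra ℂ (Matrix (Fin n) (Fin n) ℂ) := Matrix.linftyOpNormedAlgebra
  letI : SeminormedRing (Matrix (Fin n × Fin d') (Fin n × Fin d') ℂ) :=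
    Matrix.linftyOpSemiNormedRing
  letI : NormedRing (Matrix (Fin n × Fin d') (Fin n × Fin d') ℂ) := Matrix.linftyOpNormedRing
  letI : NormedAlgebra ℂ (Matrix (Fin n × Fin d') (Fin n × Fin d') ℂ) :=
    Matrix.linftyOpNormedAlgebra
  have hcont : Continuous (kronRight n d') :=
    (kronRight n d').toLinearMap.continuous_of_finiteDimensional
  exact (map_exp_of_mem_ball (𝕂 := ℂ) (kronRight n d') hcont A
    ((expSeries_radius_eq_top ℂ (Matrix (Fin n) (Fin n) ℂ)).symm ▸ edist_lt_top _ _)).symm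

end

end FeynmanClockAux

/-- The Feynman clock Hamiltonian of unitaries `U_1, …, U_N` is Hermitian and its dynamics
at time `π/2` perfectly transfers `e₀ ⊗ ψ` to `(−i)^N · e_N ⊗ (U_N ⋯ U_2 U_1 ψ)`. -/
theorem feynman_clock_evolution (N d : ℕ) (U : Fin N → Matrix (Fin d) (Fin d) ℂ)
    (hU : ∀ j, U j ∈ Matrix.unitaryGroup (Fin d) ℂ) :
    (clockHam N d U).IsHermitian ∧
      ∀ ψ : Fin d → ℂ,
        (NormedSpace.exp ((-Complex.I * ((Real.pi / 2 : ℝ) : ℂ)) • clockHam N d U)) *ᵥ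
            vecKron (Pi.single (0 : Fin (N + 1)) 1) ψ =
          (-Complex.I) ^ N •
            vecKron (Pi.single (Fin.last N) 1) ((List.ofFn U).reverse.prod *ᵥ ψ) := by
  refine ⟨clockHam_herm U, fun ψ => ?_⟩
  set c : ℂ := -Complex.I * ((Real.pi / 2 : ℝ) : ℂ) with hc
  have hVu : IsUnit (fcV U) :=
    ⟨⟨fcV U, (fcV U)ᴴ, fcV_mul_conjT U hU, mul_eq_one_comm.mp (fcV_mul_conjT U hU)⟩, rfl⟩
  have hVinv : (fcV U)⁻¹ = (fcV U)ᴴ := Matrix.inv_eq_right_inv (fcV_mul_conjT U hU)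
  have hexp : NormedSpace.exp (c • clockHam N d U) =
      fcV U * ((NormedSpace.exp (c • fcAmat N)) ⊗ₖ (1 : Matrix (Fin d) (Fin d) ℂ)) *
        (fcV U)ᴴ := by
    have h1 : c • clockHam N d U =
        fcV U * (c • ((fcAmat N) ⊗ₖ (1 : Matrix (Fin d) (Fin d) ℂ))) * (fcV U)⁻¹ := by
      rw [clockHam_conj U hU, hVinv, mul_smul_comm, smul_mul_assoc]
    rw [h1, Matrix.exp_conj _ _ hVu, hVinv]
    congr 1
    congr 1
    rw [← Matrix.smul_kronecker, exp_kron]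
  rw [hexp]
  rw [← Matrix.mulVec_mulVec, ← Matrix.mulVec_mulVec]
  -- step 1 : Vᴴ acts trivially on e₀ ⊗ ψ
  have step1 : (fcV U)ᴴ *ᵥ vecKron (Pi.single (0 : Fin (N + 1)) 1) ψ =
      vecKron (Pi.single (0 : Fin (N + 1)) 1) ψ := by
    rw [fcV_conjT, _root_.sum_mulVec]
    have hterm : ∀ k : Fin (N + 1),
        (Matrix.single k k (1 : ℂ) ⊗ₖ (fcW N d U (k : ℕ))ᴴ) *ᵥ
          vecKron (Pi.single (0 : Fin (N + 1)) 1) ψ =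
        if k = 0 then vecKron (Pi.single (0 : Fin (N + 1)) 1) ((fcW N d U 0)ᴴ *ᵥ ψ) else 0 := by
      intro k
      rw [kron_mulVec]
      rcases eq_or_ne k 0 with rfl | hk
      · rw [if_pos rfl]
        congr 1
        rw [Matrix.single_mulVec]
        funext x
        simp [vecKron, Function.update_apply, Pi.single_apply, eq_comm]
      · rw [if_neg hk]
        have h0 : Matrix.single k k (1 : ℂ) *ᵥ Pi.single (0 : Fin (N + 1)) 1 = 0 := by
          rw [Matrix.single_mulVec]
          funext x
          simp [Function.update_apply, Pi.single_apply, hk]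
        rw [h0]
        funext p
        simp [vecKron]
    rw [Finset.sum_congr rfl fun k _ => hterm k, Finset.sum_ite_eq' Finset.univ (0 : Fin (N + 1))]
    simp [fcW, Matrix.conjTranspose_one]
  rw [step1]
  -- step 2 : the bare clock evolution
  have step2 : ((NormedSpace.exp (c • fcAmat N)) ⊗ₖ (1 : Matrix (Fin d) (Fin d) ℂ)) *ᵥ
      vecKron (Pi.single (0 : Fin (N + 1)) 1) ψ =
      (-Complex.I) ^ N • vecKron (Pi.single (Fin.last N) 1) ψ := by
    rw [kron_mulVec, Matrix.one_mulVec, hc, fcAmat_exp', vecKron_smul]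
  rw [step2, Matrix.mulVec_smul]
  -- step 3 : V maps e_N ⊗ ψ to e_N ⊗ (W_N ψ)
  have step3 : fcV U *ᵥ vecKron (Pi.single (Fin.last N) 1) ψ =
      vecKron (Pi.single (Fin.last N) 1) (fcW N d U N *ᵥ ψ) := by
    rw [fcV, _root_.sum_mulVec]
    have hterm : ∀ k : Fin (N + 1),
        (Matrix.single k k (1 : ℂ) ⊗ₖ fcW N d U (k : ℕ)) *ᵥ
          vecKron (Pi.single (Fin.last N) 1) ψ =
        if k = Fin.last N then vecKron (Pi.single (Fin.last N) 1) (fcW N d U N *ᵥ ψ) else 0 := by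
      intro k
      rw [kron_mulVec]
      rcases eq_or_ne k (Fin.last N) with rfl | hk
      · rw [if_pos rfl]
        have : ((Fin.last N : Fin (N + 1)) : ℕ) = N := Fin.val_last N
        rw [this]
        congr 1
        rw [Matrix.single_mulVec]
        funext x
        simp [vecKron, Function.update_apply, Pi.single_apply, eq_comm]
      · rw [if_neg hk]
        have h0 : Matrix.single k k (1 : ℂ) *ᵥ Pi.single (Fin.last N) 1 = 0 := by
          rw [Matrix.single_mulVec]
          funext x
          simp [Function.update_apply, Pi.single_apply, hk]
        rw [h0]
        funext p
        simp [vecKron]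
    rw [Finset.sum_congr rfl fun k _ => hterm k,
      Finset.sum_ite_eq' Finset.univ (Fin.last N)]
    simp
  rw [step3, fcW_eq_prod]
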